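/- For every B ≥ 0 there exist constants C > 0 and a₀ > 0 such that for all a ≥ a₀ and all b ∈ [0, B] one has |W(a·e^{a+b}) − a − b + b/a| ≤ C/a²; that is, the asymptotic expansion −a − b + W(a e^{a+b}) = −b/a + O(1/a²) as a → ∞ holds uniformly for b in any compact interval of [0,∞). -/

import Mathlib

set_option maxHeartbeats 1000000


/-- Uniform expansion of the Lambert function: for every `B ≥ 0` there are
`C > 0` and `a₀ > 0` such that `|W(a e^{a+b}) - a - b + b/a| ≤ C/a²` for all
`a ≥ a₀` and `b ∈ [0, B]`. -/
theorem stmt_12 (W : ℝ → ℝ)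
    (hW : ∀ z : ℝ, 0 ≤ z → 0 ≤ W z ∧ W z * Real.exp (W z) = z) :
    ∀ B : ℝ, 0 ≤ B → ∃ C : ℝ, 0 < C ∧ ∃ a₀ : ℝ, 0 < a₀ ∧
      ∀ a : ℝ, a₀ ≤ a → ∀ b : ℝ, b ∈ Set.Icc 0 B →
        |W (a * Real.exp (a + b)) - a - b + b / a| ≤ C / a ^ 2 := by
  intro B hB
  set K : ℝ := B + 2 * B ^ 2 + 1 with hKdef
  have hK1 : (1:ℝ) ≤ K := by nlinarith [sq_nonneg B]
  have hKB : B ≤ K := by nlinarith [sq_nonneg B]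
  refine ⟨K, by linarith, 2 * K, by linarith, ?_⟩
  intro a ha b hb
  obtain ⟨hb0, hbB⟩ := hb
  have ha0 : (0:ℝ) < a := by linarith
  have ha2 : (2:ℝ) ≤ a := by linarith
  have haK : 2 * K ≤ a := ha
  have hz : (0:ℝ) ≤ a * Real.exp (a + b) := by positivity
  obtain ⟨hw0, hwe⟩ := hW _ hz
  set w := W (a * Real.exp (a + b)) with hwdef
  have mono : ∀ x y : ℝ, 0 ≤ x → x < y → x * Real.exp x < y * Real.exp y := by
    intro x y hx hxy
    nlinarith [Real.exp_pos y, Real.exp_le_exp.mpr hxy.le, Real.exp_pos x]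
  have habk : a * (b / a) = b := by field_simp
  have hba0 : 0 ≤ b / a := div_nonneg hb0 ha0.le
  have hbab : b / a ≤ b := by
    rw [div_le_iff₀ ha0]
    nlinarith
  -- lower bound : a + b - b/a ≤ w
  have hlow : a + b - b / a ≤ w := by
    by_contra h
    push_neg at h
    have h0 : 0 ≤ a + b - b / a := by linarith
    have hm := mono w (a + b - b / a) hw0 h
    rw [hwe] at hm
    have hsplit : Real.exp (a + b) = Real.exp (b / a) * Real.exp (a + b - b / a) := by
      rw [← Real.exp_add]; ring_nf
    have he1 : (1:ℝ) + b / a ≤ Real.exp (b / a) := by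
      have := Real.add_one_le_exp (b / a); linarith
    have hep := Real.exp_pos (a + b - b / a)
    rw [hsplit] at hm
    nlinarith [mul_le_mul_of_nonneg_right he1 hep.le]
  -- upper bound : w ≤ a + b - b/a + K/a²
  have hupp : w ≤ a + b - b / a + K / a ^ 2 := by
    obtain ⟨u, hudef⟩ : ∃ u : ℝ, u = b / a - K / a ^ 2 := ⟨_, rfl⟩
    have hueq : u = (a * b - K) / a ^ 2 := by
      rw [hudef]; field_simp
    have huB : u ≤ B / a := by
      have h1 : b / a ≤ B / a := by gcongr
      have h3 : 0 ≤ K / a ^ 2 := by positivity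
      linarith
    have huhalf : u ≤ 1 / 2 := by
      have h1 : b / a ≤ B / a := by gcongr
      have h2 : B / a ≤ 1 / 2 := by
        rw [div_le_iff₀ ha0]; linarith
      have h3 : 0 ≤ K / a ^ 2 := by positivity
      linarith [hudef]
    have hexpu : Real.exp u ≤ 1 + u + 2 * u ^ 2 := by
      have h1 : 1 - u ≤ Real.exp (-u) := by
        have := Real.add_one_le_exp (-u); linarith
      have h2 : Real.exp u * Real.exp (-u) = 1 := by
        rw [← Real.exp_add]; simp
      have h3 : Real.exp u * (1 - u) ≤ 1 := by
        nlinarith [Real.exp_pos u]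
      have c1 : (0:ℝ) ≤ 1 - 2 * u := by linarith
      have c2 : (0:ℝ) < 1 - u := by linarith
      nlinarith [Real.exp_pos u, sq_nonneg u, mul_nonneg (sq_nonneg u) c1, c2]
    have hm2 : 2 * (a * b - K) ^ 2 + a * (a * b - K) ≤ K * a ^ 2 := by
      have h1 : a * b ≤ a * B := by nlinarith
      have h2 : (a * b) ^ 2 ≤ (a * B) ^ 2 := by nlinarith [mul_nonneg ha0.le hb0]
      have h3 : 4 * K ^ 2 ≤ a ^ 2 := by nlinarith
      have h4 : 0 ≤ a * b * K := by positivity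
      nlinarith [sq_nonneg a]
    have key : a * Real.exp u ≤ a + b - u := by
      have h5 : a * (1 + u + 2 * u ^ 2) ≤ a + b - u := by
        have heq : a ^ 3 * ((a + b - u) - a * (1 + u + 2 * u ^ 2))
            = K * a ^ 2 - a * (a * b - K) - 2 * (a * b - K) ^ 2 := by
          rw [hueq]; field_simp; ring
        nlinarith [pow_pos ha0 3, mul_pos (mul_pos ha0 ha0) ha0]
      nlinarith [mul_le_mul_of_nonneg_left hexpu ha0.le]
    have h0 : 0 ≤ a + b - u := by linarith
    by_contra h
    push_neg at h
    have h' : a + b - u < w := by rw [hudef]; linarith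
    have hm := mono (a + b - u) w h0 h'
    rw [hwe] at hm
    have hsplit : Real.exp (a + b) = Real.exp u * Real.exp (a + b - u) := by
      rw [← Real.exp_add]; ring_nf
    have hep := Real.exp_pos (a + b - u)
    rw [hsplit] at hm
    have : (a + b - u) * Real.exp (a + b - u) ≥ a * Real.exp u * Real.exp (a + b - u) := by
      nlinarith [mul_le_mul_of_nonneg_right key hep.le]
    have hfin : w ≤ a + b - u := by linarith [hm]
    rw [hudef] at hfin
    linarith
  have hC : 0 ≤ K / a ^ 2 := by positivity
  rw [abs_le]
  constructor
  · nlinarith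
  · nlinarith
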